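/- Let d ≥ 2, D ∈ ℝ, and λ ∈ (0, π²/d). Set C = arctan((cos√(dλ) - e^D)/sin√(dλ)). Then tan(C + √(dλ) r) + sec(C + √(dλ) r) > 0 for all r ∈ [0,1]. -/

import Mathlib

open Real Set

theorem stmt_13 (d : ℕ) (hd : 2 ≤ d) (D lam : ℝ)
    (hlam : 0 < lam) (hlam' : lam < Real.pi ^ 2 / d)
    (s : ℝ) (hs : s = Real.sqrt (d * lam))
    (C : ℝ) (hC : C = Real.arctan ((Real.cos s - Real.exp D) / Real.sin s)) :
    ∀ r ∈ Set.Icc (0:ℝ) 1,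
      0 < Real.tan (C + s * r) + 1 / Real.cos (C + s * r) := by
  have hd0 : (0:ℝ) < d := by positivity
  have hdl : 0 < (d:ℝ) * lam := by positivity
  have hs0 : 0 < s := by rw [hs]; exact Real.sqrt_pos.mpr hdl
  have hsπ : s < Real.pi := by
    rw [hs]
    have h1 : (d:ℝ) * lam < Real.pi ^ 2 := by
      have := (lt_div_iff₀ hd0).mp hlam'
      nlinarith
    calc Real.sqrt ((d:ℝ) * lam) < Real.sqrt (Real.pi ^ 2) := by
          exact Real.sqrt_lt_sqrt hdl.le h1
      _ = Real.pi := by rw [Real.sqrt_sq Real.pi_pos.le]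
  have hsin : 0 < Real.sin s := Real.sin_pos_of_pos_of_lt_pi hs0 hsπ
  -- C < π/2 - s
  have htan : Real.tan (Real.pi / 2 - s) = Real.cos s / Real.sin s := by
    rw [Real.tan_eq_sin_div_cos, Real.sin_pi_div_two_sub, Real.cos_pi_div_two_sub]
  have harct : Real.arctan (Real.cos s / Real.sin s) = Real.pi / 2 - s := by
    rw [← htan]
    exact Real.arctan_tan (by linarith) (by linarith [Real.pi_pos])
  have hClt : C < Real.pi / 2 - s := by
    rw [hC, ← harct]
    apply Real.arctan_strictMono
    exact (div_lt_div_iff_of_pos_right hsin).mpr (sub_lt_self _ (Real.exp_pos D))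
  have hCgt : -(Real.pi / 2) < C := by rw [hC]; exact Real.neg_pi_div_two_lt_arctan _
  rintro r ⟨hr0, hr1⟩
  set θ := C + s * r with hθ
  have hsr0 : 0 ≤ s * r := mul_nonneg hs0.le hr0
  have hsr1 : s * r ≤ s := mul_le_of_le_one_right hs0.le hr1
  have hθl : -(Real.pi / 2) < θ := by simp only [hθ]; linarith
  have hθr : θ < Real.pi / 2 := by simp only [hθ]; linarith
  have hcos : 0 < Real.cos θ := Real.cos_pos_of_mem_Ioo ⟨hθl, hθr⟩
  have hsinθ : -1 < Real.sin θ := by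
    have := Real.sin_lt_sin_of_lt_of_le_pi_div_two (x := -(Real.pi/2)) (by linarith) hθr.le hθl
    simpa using this
  rw [Real.tan_eq_sin_div_cos, ← add_div]
  exact div_pos (by linarith) hcos
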